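/- Fix μ ∈ [0, 1/2]. Along every C¹ solution (r(τ), θ(τ), v(τ), u(τ)), with r(τ) > 0 and 1 + r(τ)² − 2r(τ)cos θ(τ) > 0, of the McGehee-regularized system r' = rv, θ' = u, v' = v²/2 + u² + 2u r^{3/2} + r³ − 1 + μ[1 − r²(cos θ + (r − cos θ)(1+r²−2r cos θ)^{−3/2})], u' = −uv/2 − 2v r^{3/2} + μ r² sin θ [1 − (1+r²−2r cos θ)^{−3/2}], the energy function E(r,θ,v,u) = (v² + u²)/(2r) − r²/2 − (1−μ)/r + μ(−μ/2 + r cos θ − (1+r²−2r cos θ)^{−1/2}) is constant. -/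

import Mathlib

open Real Filter
open scoped Topology

/-- The first integral of the McGehee-regularized collision system, i.e. the PCRTBP
Hamiltonian expressed in McGehee collision coordinates `(r,θ,v,u)`. -/
noncomputable def Ecol (μ r θ v u : ℝ) : ℝ :=
  (v ^ 2 + u ^ 2) / (2 * r) - r ^ 2 / 2 - (1 - μ) / r +
    μ * (-μ / 2 + r * Real.cos θ - (1 + r ^ 2 - 2 * r * Real.cos θ) ^ (-(1 / 2) : ℝ))

lemma Ecol_deriv_zero (μ : ℝ) (r θ v u : ℝ → ℝ) (τ : ℝ)
    (hr0 : 0 < r τ)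
    (hρ0 : 0 < 1 + (r τ) ^ 2 - 2 * r τ * Real.cos (θ τ))
    (hr : HasDerivAt r (r τ * v τ) τ)
    (hθ : HasDerivAt θ (u τ) τ)
    (hv : HasDerivAt v ((v τ) ^ 2 / 2 + (u τ) ^ 2 + 2 * u τ * (r τ) ^ ((3 : ℝ) / 2)
        + (r τ) ^ 3 - 1
        + μ * (1 - (r τ) ^ 2 * (Real.cos (θ τ)
            + (r τ - Real.cos (θ τ)) *
              (1 + (r τ) ^ 2 - 2 * r τ * Real.cos (θ τ)) ^ (-(3 / 2) : ℝ)))) τ)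
    (hu : HasDerivAt u (-(u τ * v τ) / 2 - 2 * v τ * (r τ) ^ ((3 : ℝ) / 2)
        + μ * (r τ) ^ 2 * Real.sin (θ τ) *
            (1 - (1 + (r τ) ^ 2 - 2 * r τ * Real.cos (θ τ)) ^ (-(3 / 2) : ℝ))) τ) :
    HasDerivAt (fun t => Ecol μ (r t) (θ t) (v t) (u t)) 0 τ := by
  have hcos : HasDerivAt (fun t => Real.cos (θ t)) (-Real.sin (θ τ) * u τ) τ :=
    (Real.hasDerivAt_cos (θ τ)).comp τ hθ
  have hρ : HasDerivAt (fun t => 1 + (r t) ^ 2 - 2 * r t * Real.cos (θ t))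
      ((2 * r τ * (r τ * v τ)) -
        (2 * (r τ * v τ) * Real.cos (θ τ) + 2 * r τ * (-Real.sin (θ τ) * u τ))) τ := by
    have h1 : HasDerivAt (fun t => 1 + (r t) ^ 2) (2 * r τ * (r τ * v τ)) τ := by
      have := hr.pow 2
      simpa using (this.const_add 1)
    have h2 : HasDerivAt (fun t => 2 * r t * Real.cos (θ t))
        (2 * (r τ * v τ) * Real.cos (θ τ) + 2 * r τ * (-Real.sin (θ τ) * u τ)) τ :=
      (hr.const_mul 2).mul hcos
    exact h1.sub h2
  have hpow : HasDerivAt (fun t => (1 + (r t) ^ 2 - 2 * r t * Real.cos (θ t)) ^ (-(1/2) : ℝ))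
      ((-(1/2) * (1 + (r τ) ^ 2 - 2 * r τ * Real.cos (θ τ)) ^ (-(1/2) - 1 : ℝ)) *
        ((2 * r τ * (r τ * v τ)) -
          (2 * (r τ * v τ) * Real.cos (θ τ) + 2 * r τ * (-Real.sin (θ τ) * u τ)))) τ :=
    (Real.hasDerivAt_rpow_const (p := (-(1/2) : ℝ)) (Or.inl hρ0.ne')).comp τ (h := fun t => 1 + (r t) ^ 2 - 2 * r t * Real.cos (θ t)) hρ
  set v' := (v τ) ^ 2 / 2 + (u τ) ^ 2 + 2 * u τ * (r τ) ^ ((3 : ℝ) / 2)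
        + (r τ) ^ 3 - 1
        + μ * (1 - (r τ) ^ 2 * (Real.cos (θ τ)
            + (r τ - Real.cos (θ τ)) *
              (1 + (r τ) ^ 2 - 2 * r τ * Real.cos (θ τ)) ^ (-(3 / 2) : ℝ))) with hv'
  set u' := -(u τ * v τ) / 2 - 2 * v τ * (r τ) ^ ((3 : ℝ) / 2)
        + μ * (r τ) ^ 2 * Real.sin (θ τ) *
            (1 - (1 + (r τ) ^ 2 - 2 * r τ * Real.cos (θ τ)) ^ (-(3 / 2) : ℝ)) with hu'
  have hnum : HasDerivAt (fun t => (v t) ^ 2 + (u t) ^ 2)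
      (2 * v τ * v' + 2 * u τ * u') τ := by
    have h1 := hv.fun_pow 2
    have h2 := hu.fun_pow 2
    simpa [mul_comm, mul_assoc, mul_left_comm] using h1.fun_add h2
  have hden : HasDerivAt (fun t => 2 * r t) (2 * (r τ * v τ)) τ := hr.const_mul 2
  have hdiv : HasDerivAt (fun t => ((v t) ^ 2 + (u t) ^ 2) / (2 * r t))
      (((2 * v τ * v' + 2 * u τ * u') * (2 * r τ) -
        ((v τ) ^ 2 + (u τ) ^ 2) * (2 * (r τ * v τ))) / (2 * r τ) ^ 2) τ :=
    hnum.div hden (by positivity)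
  have hr2 : HasDerivAt (fun t => (r t) ^ 2 / 2) (2 * r τ * (r τ * v τ) / 2) τ := by
    simpa using (hr.pow 2).div_const 2
  have hinv : HasDerivAt (fun t => (1 - μ) / r t)
      (-((1 - μ) * (r τ * v τ)) / (r τ) ^ 2) τ := by
    simpa using (hasDerivAt_const τ (1 - μ)).fun_div hr hr0.ne'
  have hrc : HasDerivAt (fun t => r t * Real.cos (θ t))
      ((r τ * v τ) * Real.cos (θ τ) + r τ * (-Real.sin (θ τ) * u τ)) τ := hr.mul hcos
  have hlast : HasDerivAt (fun t => μ * (-μ / 2 + r t * Real.cos (θ t) -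
      (1 + (r t) ^ 2 - 2 * r t * Real.cos (θ t)) ^ (-(1/2) : ℝ)))
      (μ * (((r τ * v τ) * Real.cos (θ τ) + r τ * (-Real.sin (θ τ) * u τ)) -
        ((-(1/2) * (1 + (r τ) ^ 2 - 2 * r τ * Real.cos (θ τ)) ^ (-(1/2) - 1 : ℝ)) *
        ((2 * r τ * (r τ * v τ)) -
          (2 * (r τ * v τ) * Real.cos (θ τ) + 2 * r τ * (-Real.sin (θ τ) * u τ)))))) τ := by
    have := (((hasDerivAt_const τ (-μ/2)).add hrc).sub hpow).const_mul μ
    simpa using this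
  have htot := ((hdiv.fun_sub hr2).fun_sub hinv).fun_add hlast
  have hE : (fun t => Ecol μ (r t) (θ t) (v t) (u t)) =
      fun t => ((v t) ^ 2 + (u t) ^ 2) / (2 * r t) - (r t) ^ 2 / 2 - (1 - μ) / r t +
        μ * (-μ / 2 + r t * Real.cos (θ t) -
          (1 + (r t) ^ 2 - 2 * r t * Real.cos (θ t)) ^ (-(1/2) : ℝ)) := by
    funext t; rfl
  rw [hE]
  refine htot.congr_deriv (Eq.symm ?_)
  have hexp : ((-(1/2) - 1 : ℝ)) = (-(3/2) : ℝ) := by norm_num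
  rw [hexp, hv', hu']
  set p := (1 + (r τ) ^ 2 - 2 * r τ * Real.cos (θ τ)) ^ (-(3/2) : ℝ)
  set q := (r τ) ^ ((3:ℝ)/2)
  have hrne : r τ ≠ 0 := hr0.ne'
  field_simp
  ring

/-- Along every C¹ solution of the McGehee-regularized collision system with `r > 0` and
`1 + r² - 2r cos θ > 0`, the energy `E` is constant. -/
theorem Ecol_first_integral_regularized
    (μ : ℝ) (hμ : μ ∈ Set.Icc (0 : ℝ) (1 / 2))
    (I : Set ℝ) (hI : I.OrdConnected)
    (r θ v u : ℝ → ℝ)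
    (hsol : ∀ τ ∈ I,
      0 < r τ ∧
      0 < 1 + (r τ) ^ 2 - 2 * r τ * Real.cos (θ τ) ∧
      HasDerivAt r (r τ * v τ) τ ∧
      HasDerivAt θ (u τ) τ ∧
      HasDerivAt v ((v τ) ^ 2 / 2 + (u τ) ^ 2 + 2 * u τ * (r τ) ^ ((3 : ℝ) / 2)
        + (r τ) ^ 3 - 1
        + μ * (1 - (r τ) ^ 2 * (Real.cos (θ τ)
            + (r τ - Real.cos (θ τ)) *
              (1 + (r τ) ^ 2 - 2 * r τ * Real.cos (θ τ)) ^ (-(3 / 2) : ℝ)))) τ ∧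
      HasDerivAt u (-(u τ * v τ) / 2 - 2 * v τ * (r τ) ^ ((3 : ℝ) / 2)
        + μ * (r τ) ^ 2 * Real.sin (θ τ) *
            (1 - (1 + (r τ) ^ 2 - 2 * r τ * Real.cos (θ τ)) ^ (-(3 / 2) : ℝ))) τ) :
    ∀ τ₁ ∈ I, ∀ τ₂ ∈ I,
      Ecol μ (r τ₁) (θ τ₁) (v τ₁) (u τ₁) = Ecol μ (r τ₂) (θ τ₂) (v τ₂) (u τ₂) := by
  set F := fun t => Ecol μ (r t) (θ t) (v t) (u t) with hF
  have key : ∀ τ ∈ I, HasDerivAt F 0 τ := fun τ hτ => by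
    obtain ⟨h1, h2, h3, h4, h5, h6⟩ := hsol τ hτ
    exact Ecol_deriv_zero μ r θ v u τ h1 h2 h3 h4 h5 h6
  have main : ∀ a ∈ I, ∀ b ∈ I, a ≤ b → F b = F a := by
    intro a ha b hb hab
    have hsub : Set.Icc a b ⊆ I := hI.out ha hb
    have hcont : ContinuousOn F (Set.Icc a b) := fun x hx =>
      ((key x (hsub hx)).continuousAt).continuousWithinAt
    have hderiv : ∀ x ∈ Set.Ico a b, HasDerivWithinAt F 0 (Set.Ici x) x := fun x hx =>
      (key x (hsub ⟨hx.1, hx.2.le⟩)).hasDerivWithinAt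
    exact constant_of_has_deriv_right_zero hcont hderiv b ⟨hab, le_rfl⟩
  intro τ₁ h₁ τ₂ h₂
  rcases le_total τ₁ τ₂ with h | h
  · exact (main τ₁ h₁ τ₂ h₂ h).symm
  · exact main τ₂ h₂ τ₁ h₁ h
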